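/- arXiv:2009.01071 — 8 statements merged into one kernel-verified Lean document; each statement's English description precedes it below -/
import Mathlib

section
/- Let σ be a partial action of a locally compact Hausdorff group G on a locally compact Hausdorff space X. If the map F_σ : Γ_σ → X × X, (t,x) ↦ (σ_t(x), x), is proper (preimages of compact sets are compact), then for every pair of compact sets L, M ⊆ X the set ((L,M)) := { t ∈ G : σ_t(L ∩ X_{t⁻¹}) ∩ M ≠ ∅ } is compact. -/
/-- A set-theoretic partial action of a group `H` on a set (type) `Y`:
domains `dom t ⊆ Y` and maps `act t : dom t⁻¹ → dom t` (encoded as total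
functions whose axioms are only required on the domains), satisfying
`Y_e = Y`, `σ_e = id`, `σ_t⁻¹ = σ_{t⁻¹}` and `σ_t ∘ σ_s ⊆ σ_{ts}`. -/
structure PartialAction (H : Type*) [Group H] (Y : Type*) where
  dom : H → Set Y
  act : H → Y → Y
  dom_one : dom 1 = Set.univ
  act_one : ∀ y, act 1 y = y
  mapsTo : ∀ t y, y ∈ dom t⁻¹ → act t y ∈ dom t
  act_inv : ∀ t y, y ∈ dom t⁻¹ → act t⁻¹ (act t y) = y
  mem_dom_mul : ∀ s t y, y ∈ dom s⁻¹ → act s y ∈ dom t⁻¹ → y ∈ dom (t * s)⁻¹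
  act_mul : ∀ s t y, y ∈ dom s⁻¹ → act s y ∈ dom t⁻¹ → act t (act s y) = act (t * s) y

/-- The orbit `[U] = ⋃_{t ∈ H} σ_t (U ∩ Y_{t⁻¹})` of a subset `U ⊆ Y`. -/
def PartialAction.orbit {H Y : Type*} [Group H] (σ : PartialAction H Y) (U : Set Y) : Set Y :=
  ⋃ t : H, σ.act t '' (U ∩ σ.dom t⁻¹)

/-- If `F_σ : Γ_σ → X × X`, `(t,x) ↦ (σ_t x, x)` is proper (preimages of compact
sets are compact), then for every pair of compact sets `L, M ⊆ X` the set
`((L,M)) = {t : σ_t(L ∩ X_{t⁻¹}) ∩ M ≠ ∅}` is compact. -/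
theorem compact_LM_of_proper {G X : Type*}
    [TopologicalSpace G] [Group G] [IsTopologicalGroup G] [LocallyCompactSpace G] [T2Space G]
    [TopologicalSpace X] [LocallyCompactSpace X] [T2Space X]
    (σ : PartialAction G X)
    (hdom : ∀ t, IsOpen (σ.dom t))
    (hcont : ContinuousOn (fun p : G × X => σ.act p.1 p.2) {p : G × X | p.2 ∈ σ.dom p.1⁻¹})
    (hproper : ∀ K : Set (X × X), IsCompact K →
      IsCompact {p : G × X | p.2 ∈ σ.dom p.1⁻¹ ∧ (σ.act p.1 p.2, p.2) ∈ K}) :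
    ∀ L M : Set X, IsCompact L → IsCompact M →
      IsCompact {t : G | ((σ.act t '' (L ∩ σ.dom t⁻¹)) ∩ M).Nonempty} := by
  intro L M hL hM
  have hS := hproper (M ×ˢ L) (hM.prod hL)
  have : {t : G | ((σ.act t '' (L ∩ σ.dom t⁻¹)) ∩ M).Nonempty}
      = Prod.fst '' {p : G × X | p.2 ∈ σ.dom p.1⁻¹ ∧ (σ.act p.1 p.2, p.2) ∈ M ×ˢ L} := by
    ext t
    constructor
    · rintro ⟨y, ⟨x, ⟨hxL, hxd⟩, rfl⟩, hyM⟩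
      exact ⟨(t, x), ⟨hxd, hyM, hxL⟩, rfl⟩
    · rintro ⟨⟨t', x⟩, ⟨hxd, hM', hL'⟩, rfl⟩
      exact ⟨σ.act t' x, ⟨x, ⟨hL', hxd⟩, rfl⟩, hM'⟩
  rw [this]
  exact hS.image continuous_fst
end

section
/- Let σ be a partial action of a locally compact Hausdorff group G on a locally compact Hausdorff space X such that for all compact L, M ⊆ X the set ((L,M)) := { t ∈ G : σ_t(L ∩ X_{t⁻¹}) ∩ M ≠ ∅ } is compact. Then ((L,M)) has compact closure for all compact L, M (trivially), but there exists an example showing the converse fails: the partial action of ℝ on ℝ²∖{0} given by the flow of the constant horizontal vector field satisfies the compact-closure condition yet ((L,M)) = (2,3] is not compact for L = [(-2,1),(-1,0)] and M = [(1,1),(1,0)]. -/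
/-- The punctured plane `ℝ² ∖ {0}`, carrier of the flow example. -/
def flowDom (t : ℝ) : Set (ℝ × ℝ) :=
  {p : ℝ × ℝ | p ≠ (0, 0) ∧ ∀ s ∈ Set.Icc (0 : ℝ) 1, p ≠ (s * t, 0)}

/-- The flow `φ_t(x,y) = (x+t,y)`. -/
def flowAct (t : ℝ) (p : ℝ × ℝ) : ℝ × ℝ := (p.1 + t, p.2)

/-- The closed segment `L` from `(-2,1)` to `(-1,0)`. -/
noncomputable def Lseg : Set (ℝ × ℝ) := segment ℝ ((-2 : ℝ), (1 : ℝ)) ((-1 : ℝ), (0 : ℝ))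

/-- The closed segment `M` from `(1,1)` to `(1,0)`. -/
noncomputable def Mseg : Set (ℝ × ℝ) := segment ℝ ((1 : ℝ), (1 : ℝ)) ((1 : ℝ), (0 : ℝ))

/-- The set `((L,M)) = {t : φ_t(L ∩ X_{-t}) ∩ M ≠ ∅}` for the flow example. -/
noncomputable def flowLM : Set ℝ :=
  {t : ℝ | ((flowAct t '' (Lseg ∩ flowDom (-t))) ∩ Mseg).Nonempty}

lemma mem_Lseg (p : ℝ × ℝ) : p ∈ Lseg ↔ ∃ y ∈ Set.Icc (0:ℝ) 1, p = (-1 - y, y) := by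
  rw [Lseg, segment_eq_image]
  constructor
  · rintro ⟨θ, hθ, rfl⟩
    refine ⟨1 - θ, ⟨by linarith [hθ.2], by linarith [hθ.1]⟩, ?_⟩
    simp [Prod.ext_iff]
    try ring
  · rintro ⟨y, hy, rfl⟩
    refine ⟨1 - y, ⟨by linarith [hy.2], by linarith [hy.1]⟩, ?_⟩
    simp [Prod.ext_iff]
    try ring

lemma mem_Mseg (p : ℝ × ℝ) : p ∈ Mseg ↔ ∃ y ∈ Set.Icc (0:ℝ) 1, p = (1, y) := by
  rw [Mseg, segment_eq_image]
  constructor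
  · rintro ⟨θ, hθ, rfl⟩
    refine ⟨1 - θ, ⟨by linarith [hθ.2], by linarith [hθ.1]⟩, ?_⟩
    simp [Prod.ext_iff]
    try ring
  · rintro ⟨y, hy, rfl⟩
    refine ⟨1 - y, ⟨by linarith [hy.2], by linarith [hy.1]⟩, ?_⟩
    simp [Prod.ext_iff]
    try ring

lemma flowLM_eq : flowLM = Set.Ioc 2 3 := by
  ext t
  simp only [flowLM, Set.mem_setOf_eq, Set.mem_Ioc]
  constructor
  · rintro ⟨q, ⟨p, ⟨hpL, hpD⟩, rfl⟩, hqM⟩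
    rw [mem_Lseg] at hpL
    obtain ⟨y, hy, rfl⟩ := hpL
    rw [mem_Mseg] at hqM
    obtain ⟨y', hy', hq⟩ := hqM
    simp only [flowAct, Prod.mk.injEq] at hq
    obtain ⟨h1, h2⟩ := hq
    -- t = 2 + y
    have ht : t = 2 + y := by linarith
    refine ⟨?_, by linarith [hy.2]⟩
    rcases lt_or_eq_of_le hy.1 with hpos | hzero
    · linarith
    · exfalso
      have := hpD.2 (1/2) ⟨by norm_num, by norm_num⟩
      apply this
      rw [← hzero, ht, ← hzero]
      norm_num
  · rintro ⟨h2, h3⟩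
    refine ⟨(1, t - 2), ⟨(-1 - (t - 2), t - 2), ⟨⟨?_, ?_, ?_⟩, ?_⟩⟩, ?_⟩
    · rw [mem_Lseg]
      exact ⟨t - 2, ⟨by linarith, by linarith⟩, rfl⟩
    · intro hc
      have := congrArg Prod.snd hc
      simp at this
      linarith
    · intro s _ hc
      have := congrArg Prod.snd hc
      simp at this
      linarith
    · simp [flowAct]
      ring
    · rw [mem_Mseg]
      exact ⟨t - 2, ⟨by linarith, by linarith⟩, rfl⟩

lemma not_compact_Ioc : ¬ IsCompact (Set.Ioc (2 : ℝ) 3) := by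
  intro hc
  have hcl : IsClosed (Set.Ioc (2 : ℝ) 3) := hc.isClosed
  have : (2 : ℝ) ∈ Set.Ioc (2 : ℝ) 3 := by
    rw [← hcl.closure_eq, closure_Ioc (by norm_num : (2:ℝ) ≠ 3)]
    exact ⟨le_refl _, by norm_num⟩
  exact lt_irrefl 2 this.1

/-- If `((L,M))` is compact for all compact `L, M`, then trivially `((L,M))` has
compact closure; the converse fails: in the flow partial action of `ℝ` on
`ℝ² ∖ {0}` one has `((L,M)) = (2,3]`, which is not compact, for the segments
`L = [(-2,1),(-1,0)]` and `M = [(1,1),(1,0)]`. -/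
theorem closure_compact_and_flow_counterexample {G X : Type*}
    [TopologicalSpace G] [Group G] [IsTopologicalGroup G] [LocallyCompactSpace G] [T2Space G]
    [TopologicalSpace X] [LocallyCompactSpace X] [T2Space X]
    (σ : PartialAction G X)
    (hdom : ∀ t, IsOpen (σ.dom t))
    (hcont : ContinuousOn (fun p : G × X => σ.act p.1 p.2) {p : G × X | p.2 ∈ σ.dom p.1⁻¹})
    (h : ∀ L M : Set X, IsCompact L → IsCompact M →
      IsCompact {t : G | ((σ.act t '' (L ∩ σ.dom t⁻¹)) ∩ M).Nonempty}) :
    (∀ L M : Set X, IsCompact L → IsCompact M →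
      IsCompact (closure {t : G | ((σ.act t '' (L ∩ σ.dom t⁻¹)) ∩ M).Nonempty})) ∧
    flowLM = Set.Ioc 2 3 ∧ ¬ IsCompact (Set.Ioc (2 : ℝ) 3) := by
  refine ⟨fun L M hL hM => ?_, flowLM_eq, not_compact_Ioc⟩
  rw [(h L M hL hM).isClosed.closure_eq]
  exact h L M hL hM
end

section
/- Let τ be a topological partial action of H on Y with enveloping action τ^e on Y^e. The map h : Y/τ → Y^e/τ^e, [y]_τ ↦ [y]_{τ^e}, is well defined and is a homeomorphism between the orbit spaces (with quotient topologies). -/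
/-- The orbit equivalence relation of the partial action `τ` obtained by
restricting a global action of `H` on `Y^e` to a subset `Y`: two points of `Y`
are equivalent iff one is carried to the other by the (partial) action. -/
def tauSetoid (H : Type*) [Group H] {Ye : Type*} [MulAction H Ye] (Y : Set Ye) : Setoid Y where
  r y z := ∃ t : H, t • (y : Ye) = (z : Ye)
  iseqv := ⟨fun y => ⟨1, one_smul H (y : Ye)⟩,
    fun {y z} h => by
      obtain ⟨t, ht⟩ := h
      exact ⟨t⁻¹, by rw [← ht, inv_smul_smul]⟩,
    fun {x y z} h h' => by
      obtain ⟨t, ht⟩ := h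
      obtain ⟨t', ht'⟩ := h'
      exact ⟨t' * t, by rw [mul_smul, ht, ht']⟩⟩

/-- Let `τ^e` be a global continuous action of `H` on `Y^e` and `Y ⊆ Y^e` open
with `Y^e = ⋃_t τ^e_t(Y)` (so `τ^e` is the enveloping action of the restricted
partial action `τ` on `Y`).  Then `[y]_τ ↦ [y]_{τ^e}` is a well-defined
homeomorphism of the orbit spaces `Y/τ ≃ₜ Y^e/τ^e` (quotient topologies). -/
theorem orbitSpace_homeomorph_envOrbitSpace {H Ye : Type*} [Group H] [TopologicalSpace Ye]
    [MulAction H Ye] (Y : Set Ye) (hY : IsOpen Y)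
    (hc : ∀ t : H, Continuous fun y : Ye => t • y)
    (hcover : ∀ z : Ye, ∃ t : H, ∃ y ∈ Y, t • y = z) :
    ∃ h : Quotient (tauSetoid H Y) ≃ₜ Quotient (MulAction.orbitRel H Ye),
      ∀ y : Y, h (Quotient.mk (tauSetoid H Y) y)
        = Quotient.mk (MulAction.orbitRel H Ye) (y : Ye) := by
  classical
  -- a selection: for each `z : Ye` pick `t : H` and `y ∈ Y` with `t • y = z`
  let sel : ∀ z : Ye, {p : H × Y // p.1 • (p.2 : Ye) = z} := fun z =>
    Classical.choice (by
      obtain ⟨t, y, hy, h⟩ := hcover z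
      exact ⟨⟨(t, ⟨y, hy⟩), h⟩⟩)
  -- forward map on representatives
  have fresp : ∀ a b : Y, (tauSetoid H Y).r a b →
      Quotient.mk (MulAction.orbitRel H Ye) (a : Ye)
        = Quotient.mk (MulAction.orbitRel H Ye) (b : Ye) := by
    rintro a b ⟨t, ht⟩
    exact Quotient.sound ⟨t⁻¹, show t⁻¹ • (b : Ye) = (a : Ye) by rw [← ht, inv_smul_smul]⟩
  let f : Quotient (tauSetoid H Y) → Quotient (MulAction.orbitRel H Ye) :=
    Quotient.lift (fun y : Y => Quotient.mk (MulAction.orbitRel H Ye) (y : Ye)) fresp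
  -- inverse map on representatives
  let g0 : Ye → Quotient (tauSetoid H Y) := fun z => Quotient.mk (tauSetoid H Y) (sel z).1.2
  have key : ∀ (z : Ye) (t : H) (y : Y), t • (y : Ye) = z →
      g0 z = Quotient.mk (tauSetoid H Y) y := by
    intro z t y h
    have h2 := (sel z).2
    exact Quotient.sound ⟨t⁻¹ * (sel z).1.1, by rw [mul_smul, h2, ← h, inv_smul_smul]⟩
  have gresp : ∀ a b : Ye, (MulAction.orbitRel H Ye).r a b → g0 a = g0 b := by
    intro a b hab
    obtain ⟨s, hs⟩ := hab
    have h2 := (sel b).2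
    have : (s * (sel b).1.1) • ((sel b).1.2 : Ye) = a := by
      rw [mul_smul, h2]; exact hs
    rw [key a (s * (sel b).1.1) (sel b).1.2 this]
  let g : Quotient (MulAction.orbitRel H Ye) → Quotient (tauSetoid H Y) :=
    Quotient.lift g0 gresp
  -- continuity of g0
  have hg0 : Continuous g0 := by
    rw [continuous_def]
    intro U hU
    have hVY : IsOpen (Quotient.mk (tauSetoid H Y) ⁻¹' U : Set Y) :=
      hU.preimage continuous_quotient_mk'
    set V : Set Ye := Subtype.val '' (Quotient.mk (tauSetoid H Y) ⁻¹' U) with hVdef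
    have hV : IsOpen V := hY.isOpenMap_subtype_val _ hVY
    have : g0 ⁻¹' U = ⋃ t : H, (fun z : Ye => t⁻¹ • z) ⁻¹' V := by
      ext z
      simp only [Set.mem_preimage, Set.mem_iUnion]
      constructor
      · intro hz
        refine ⟨(sel z).1.1, ?_⟩
        refine ⟨(sel z).1.2, hz, ?_⟩
        exact (eq_inv_smul_iff).2 (sel z).2
      · rintro ⟨t, y, hyU, hy⟩
        have : t • (y : Ye) = z := by rw [hy, smul_inv_smul]
        rw [key z t y this]
        exact hyU
    rw [this]
    exact isOpen_iUnion fun t => hV.preimage (hc t⁻¹)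
  -- assemble the homeomorphism
  refine ⟨⟨⟨f, g, ?_, ?_⟩, ?_, ?_⟩, fun y => rfl⟩
  · intro q
    induction q using Quotient.ind with
    | _ y => exact key (y : Ye) 1 y (one_smul H (y : Ye))
  · intro q
    induction q using Quotient.ind with
    | _ z =>
      show Quotient.mk _ ((sel z).1.2 : Ye) = Quotient.mk _ z
      exact Quotient.sound ⟨(sel z).1.1⁻¹,
        show (sel z).1.1⁻¹ • z = ((sel z).1.2 : Ye) from inv_smul_eq_iff.2 (sel z).2.symm⟩
  · exact (continuous_quotient_mk'.comp continuous_subtype_val).quotient_lift fresp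
  · exact hg0.quotient_lift gresp
end

section
/- Let σ be a LCH partial action of G on X with enveloping action σ^e on X^e. If σ^e is a proper action on a locally compact Hausdorff space X^e, then every net {(t_i, x_i)} in Γ_σ for which {(σ_{t_i}(x_i), x_i)} converges in X × X has a subnet converging to a point of Γ_σ. -/
open Filter

/-- Let `σ^e` be a proper continuous global action of a LCH group `G` on a LCH
space `X^e`, and let `σ` be the partial action obtained by restricting it to an
open subset `X` with `X^e = ⋃_t σ^e_t(X)` (so `σ^e` is the enveloping action of
`σ`).  Then every net `(t_i, x_i)` in `Γ_σ` for which `(σ_{t_i}(x_i), x_i)`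
converges to a point of `X × X` has a subnet (cluster point) converging to a
point of `Γ_σ`. -/
theorem exists_clusterPt_of_proper_env {G Xe : Type*}
    [TopologicalSpace G] [Group G] [IsTopologicalGroup G] [LocallyCompactSpace G] [T2Space G]
    [TopologicalSpace Xe] [T2Space Xe] [LocallyCompactSpace Xe]
    [MulAction G Xe] [ContinuousSMul G Xe]
    (X : Set Xe) (hX : IsOpen X)
    (hcover : ∀ z : Xe, ∃ t : G, ∃ x ∈ X, t • x = z)
    (hproper : IsProperMap (fun p : G × Xe => (p.1 • p.2, p.2)))
    {ι : Type*} (l : Filter ι) [l.NeBot] (f : ι → G × Xe)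
    (hf : ∀ i, (f i).2 ∈ X ∧ (f i).1 • (f i).2 ∈ X)
    (p : Xe × Xe) (hp1 : p.1 ∈ X) (hp2 : p.2 ∈ X)
    (hconv : Tendsto (fun i => ((f i).1 • (f i).2, (f i).2)) l (nhds p)) :
    ∃ q : G × Xe, (q.2 ∈ X ∧ q.1 • q.2 ∈ X) ∧ MapClusterPt q l f := by
  have hcp : MapClusterPt p (Filter.map f l) (fun q : G × Xe => (q.1 • q.2, q.2)) := by
    rw [MapClusterPt, Filter.map_map]
    exact (ClusterPt.of_le_nhds hconv)
  obtain ⟨q, hq, hcl⟩ := hproper.clusterPt_of_mapClusterPt hcp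
  have h1 : q.1 • q.2 = p.1 := congrArg Prod.fst hq
  have h2 : q.2 = p.2 := congrArg Prod.snd hq
  exact ⟨q, ⟨h2 ▸ hp2, h1 ▸ hp1⟩, hcl⟩
end

section
/- Let σ be a LCH partial action of G on X such that F_σ : Γ_σ → X × X is proper. Then the graph Gr(σ) = { (t,x,y) ∈ G × X × X : x ∈ X_{t⁻¹}, y = σ_t(x) } is closed in G × X × X. -/
/-- If `F_σ : Γ_σ → X × X` is proper, then the graph
`Gr(σ) = {(t,x,y) : x ∈ X_{t⁻¹}, y = σ_t(x)}` is closed in `G × X × X`. -/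
theorem graph_closed_of_proper {G X : Type*}
    [TopologicalSpace G] [Group G] [IsTopologicalGroup G] [LocallyCompactSpace G] [T2Space G]
    [TopologicalSpace X] [LocallyCompactSpace X] [T2Space X]
    (σ : PartialAction G X)
    (hdom : ∀ t, IsOpen (σ.dom t))
    (hcont : ContinuousOn (fun p : G × X => σ.act p.1 p.2) {p : G × X | p.2 ∈ σ.dom p.1⁻¹})
    (hproper : ∀ K : Set (X × X), IsCompact K →
      IsCompact {p : G × X | p.2 ∈ σ.dom p.1⁻¹ ∧ (σ.act p.1 p.2, p.2) ∈ K}) :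
    IsClosed {q : G × X × X | q.2.1 ∈ σ.dom q.1⁻¹ ∧ σ.act q.1 q.2.1 = q.2.2} := by
  set S := {q : G × X × X | q.2.1 ∈ σ.dom q.1⁻¹ ∧ σ.act q.1 q.2.1 = q.2.2} with hS
  rw [isClosed_iff_clusterPt]
  rintro ⟨t, x, y⟩ hq
  have hF : (nhds (t, x, y) ⊓ Filter.principal S).NeBot := hq
  obtain ⟨Kx, hKxc, hKx⟩ := exists_compact_mem_nhds x
  obtain ⟨Ky, hKyc, hKy⟩ := exists_compact_mem_nhds y
  have hL := hproper (Ky ×ˢ Kx) (hKyc.prod hKxc)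
  set L := {p : G × X | p.2 ∈ σ.dom p.1⁻¹ ∧ (σ.act p.1 p.2, p.2) ∈ Ky ×ˢ Kx} with hLdef
  set F := nhds (t, x, y) ⊓ Filter.principal S with hFdef
  have hle : F ≤ nhds (t, x, y) := inf_le_left
  have hmem : ∀ᶠ q in F, q ∈ S := by
    have : F ≤ Filter.principal S := inf_le_right
    exact this (Filter.mem_principal_self S)
  have hmap : Filter.Tendsto (fun q : G × X × X => (q.1, q.2.1)) F (nhds (t, x)) := by
    have hc : Continuous (fun q : G × X × X => (q.1, q.2.1)) :=
      continuous_fst.prodMk (continuous_fst.comp continuous_snd)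
    exact (hc.tendsto (t, x, y)).comp hle
  have hx : ∀ᶠ q : G × X × X in F, q.2.1 ∈ Kx :=
    hle (((continuous_fst.comp continuous_snd).tendsto (t, x, y)) hKx)
  have hy : ∀ᶠ q : G × X × X in F, q.2.2 ∈ Ky :=
    hle (((continuous_snd.comp continuous_snd).tendsto (t, x, y)) hKy)
  have hevL : ∀ᶠ q : G × X × X in F, (q.1, q.2.1) ∈ L := by
    filter_upwards [hmem, hx, hy] with q hqS hqx hqy
    exact ⟨hqS.1, by rw [hqS.2]; exact ⟨hqy, hqx⟩⟩
  have htx : (t, x) ∈ L := hL.isClosed.mem_of_tendsto hmap hevL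
  have hxd : x ∈ σ.dom t⁻¹ := htx.1
  refine ⟨hxd, ?_⟩
  have hcw : Filter.Tendsto (fun p : G × X => σ.act p.1 p.2)
      (nhdsWithin (t, x) {p : G × X | p.2 ∈ σ.dom p.1⁻¹}) (nhds (σ.act t x)) :=
    hcont (t, x) hxd
  have hmapW : Filter.Tendsto (fun q : G × X × X => (q.1, q.2.1)) F
      (nhdsWithin (t, x) {p : G × X | p.2 ∈ σ.dom p.1⁻¹}) := by
    refine tendsto_nhdsWithin_of_tendsto_nhds_of_eventually_within _ hmap ?_
    filter_upwards [hmem] with q hqS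
    exact hqS.1
  have h1 : Filter.Tendsto (fun q : G × X × X => σ.act q.1 q.2.1) F (nhds (σ.act t x)) :=
    hcw.comp hmapW
  have h2 : Filter.Tendsto (fun q : G × X × X => q.2.2) F (nhds y) :=
    ((continuous_snd.comp continuous_snd).tendsto (t, x, y)).comp hle
  have h1' : Filter.Tendsto (fun q : G × X × X => q.2.2) F (nhds (σ.act t x)) := by
    refine h1.congr' ?_
    filter_upwards [hmem] with q hqS
    exact hqS.2
  exact tendsto_nhds_unique h1' h2
end

section
/- Let σ be a LCH partial action of G on X such that F_σ : Γ_σ → X × X is proper, and let σ^e be its enveloping action on X^e. Then X^e is Hausdorff and the action σ^e is proper. -/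
open Filter Topology

/-- In a locally compact open subset, points have compact neighborhoods inside the subset. -/
lemma aux_exists_compact_nhd {Xe : Type*} [TopologicalSpace Xe] (X : Set Xe) (hX : IsOpen X)
    [LocallyCompactSpace X] {x : Xe} (hx : x ∈ X) :
    ∃ K : Set Xe, K ⊆ X ∧ IsCompact K ∧ K ∈ 𝓝 x := by
  obtain ⟨K, hKc, hKnhd⟩ := exists_compact_mem_nhds (⟨x, hx⟩ : X)
  refine ⟨Subtype.val '' K, ?_, hKc.image continuous_subtype_val, ?_⟩
  · rintro _ ⟨k, -, rfl⟩; exact k.2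
  · rw [nhds_subtype_eq_comap] at hKnhd
    obtain ⟨S, hS, hSK⟩ := hKnhd
    filter_upwards [inter_mem hS (hX.mem_nhds hx)] with y hy
    exact ⟨⟨y, hy.2⟩, hSK hy.1, rfl⟩

/-- Limits of a filter containing an open Hausdorff subset are unique within that subset. -/
lemma aux_unique_lim {Xe : Type*} [TopologicalSpace Xe] (X : Set Xe) (hX : IsOpen X)
    [T2Space X] (F : Filter Xe) [F.NeBot] (hF : X ∈ F) {a b : Xe}
    (ha : a ∈ X) (hb : b ∈ X) (hFa : F ≤ 𝓝 a) (hFb : F ≤ 𝓝 b) : a = b := by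
  by_contra hne
  obtain ⟨U, V, hU, hV, haU, hbV, hUV⟩ :=
    t2_separation (show (⟨a, ha⟩ : X) ≠ ⟨b, hb⟩ by simpa [Subtype.ext_iff] using hne)
  have hU' : Subtype.val '' U ∈ F :=
    hFa ((hX.isOpenMap_subtype_val U hU).mem_nhds ⟨⟨a, ha⟩, haU, rfl⟩)
  have hV' : Subtype.val '' V ∈ F :=
    hFb ((hX.isOpenMap_subtype_val V hV).mem_nhds ⟨⟨b, hb⟩, hbV, rfl⟩)
  obtain ⟨y, ⟨u, huU, hu⟩, ⟨v, hvV, hv⟩⟩ := Filter.nonempty_of_mem (inter_mem hU' hV')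
  have : u = v := Subtype.ext (hu.trans hv.symm)
  exact (hUV.le_bot ⟨huU, this ▸ hvV⟩).elim

/-- Let `σ^e` be a continuous global action of a LCH group `G` on a space
`X^e`, and let `σ` be the partial action obtained by restricting it to an open
subset `X` which is locally compact Hausdorff, with `X^e = ⋃_t σ^e_t(X)` (so
`σ^e` is the enveloping action of the LCH partial action `σ`).  If
`F_σ : Γ_σ → X × X`, `(t,x) ↦ (σ_t(x), x)`, is proper, then `X^e` is Hausdorff
and the enveloping action `σ^e` is proper. -/
theorem env_hausdorff_and_proper_of_proper {G Xe : Type*}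
    [TopologicalSpace G] [Group G] [IsTopologicalGroup G] [LocallyCompactSpace G] [T2Space G]
    [TopologicalSpace Xe] [MulAction G Xe] [ContinuousSMul G Xe]
    (X : Set Xe) (hX : IsOpen X) [T2Space X] [LocallyCompactSpace X]
    (hcover : ∀ z : Xe, ∃ t : G, ∃ x ∈ X, t • x = z)
    (hFproper : ∀ K : Set (Xe × Xe), K ⊆ X ×ˢ X → IsCompact K →
      IsCompact {p : G × Xe | (p.2 ∈ X ∧ p.1 • p.2 ∈ X) ∧ (p.1 • p.2, p.2) ∈ K}) :
    T2Space Xe ∧ IsProperMap (fun p : G × Xe => (p.1 • p.2, p.2)) := by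
  -- Key compactness-trap lemma.
  have key : ∀ (𝒱 : Ultrafilter (G × Xe)) (x y : Xe), x ∈ X → y ∈ X →
      Tendsto Prod.snd (𝒱 : Filter (G × Xe)) (𝓝 x) →
      Tendsto (fun p : G × Xe => p.1 • p.2) (𝒱 : Filter (G × Xe)) (𝓝 y) →
      ∃ g : G, g • x = y ∧ (𝒱 : Filter (G × Xe)) ≤ 𝓝 (g, x) := by
    intro 𝒱 x y hx hy hsnd hsmul
    obtain ⟨Kx, hKxX, hKxc, hKxn⟩ := aux_exists_compact_nhd X hX hx
    obtain ⟨Ky, hKyX, hKyc, hKyn⟩ := aux_exists_compact_nhd X hX hy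
    set L := {p : G × Xe | (p.2 ∈ X ∧ p.1 • p.2 ∈ X) ∧ (p.1 • p.2, p.2) ∈ Ky ×ˢ Kx}
    have hLc : IsCompact L :=
      hFproper (Ky ×ˢ Kx) (Set.prod_mono hKyX hKxX) (hKyc.prod hKxc)
    have hL : L ∈ 𝒱 := by
      filter_upwards [hsnd hKxn, hsmul hKyn] with p h1 h2
      exact ⟨⟨hKxX h1, hKyX h2⟩, h2, h1⟩
    obtain ⟨⟨g, v⟩, hgvL, hgv⟩ := hLc.ultrafilter_le_nhds 𝒱 (le_principal_iff.mpr hL)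
    have hsndv : Tendsto Prod.snd (𝒱 : Filter (G × Xe)) (𝓝 v) :=
      (continuous_snd.tendsto _).comp hgv
    have hsmulv : Tendsto (fun p : G × Xe => p.1 • p.2) (𝒱 : Filter (G × Xe)) (𝓝 (g • v)) :=
      ((continuous_fst.smul continuous_snd).tendsto _).comp hgv
    have hXsnd : X ∈ (𝒱 : Filter (G × Xe)).map Prod.snd :=
      mem_map.mpr (mem_of_superset hL fun p hp => hp.1.1)
    have hXsmul : X ∈ (𝒱 : Filter (G × Xe)).map (fun p : G × Xe => p.1 • p.2) :=
      mem_map.mpr (mem_of_superset hL fun p hp => hp.1.2)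
    have hvx : v = x :=
      aux_unique_lim X hX _ hXsnd hgvL.1.1 hx hsndv hsnd
    have hgvy : g • v = y :=
      aux_unique_lim X hX _ hXsmul hgvL.1.2 hy hsmulv hsmul
    exact ⟨g, by rw [← hvx]; exact hgvy, hvx ▸ hgv⟩
  -- Hausdorffness.
  have hT2 : T2Space Xe := by
    rw [t2_iff_ultrafilter]
    intro z w 𝒰 hz hw
    obtain ⟨s, x, hxX, rfl⟩ := hcover z
    obtain ⟨r, y, hyX, rfl⟩ := hcover w
    set t : G := s⁻¹ * r with ht
    -- translate by s⁻¹
    have h1 : Tendsto (fun u : Xe => s⁻¹ • u) (𝒰 : Filter Xe) (𝓝 x) := by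
      have := ((continuous_const_smul s⁻¹).tendsto (s • x)).comp hz
      simpa [inv_smul_smul, Function.comp_def] using this
    have h2 : Tendsto (fun u : Xe => t⁻¹ • s⁻¹ • u) (𝒰 : Filter Xe) (𝓝 y) := by
      have := ((continuous_const_smul (t⁻¹ * s⁻¹)).tendsto (r • y)).comp hw
      simpa [ht, mul_smul, smul_smul, mul_assoc, Function.comp_def] using this
    set 𝒱 : Ultrafilter (G × Xe) := 𝒰.map (fun u => (t⁻¹, s⁻¹ • u)) with h𝒱
    have hsnd : Tendsto Prod.snd (𝒱 : Filter (G × Xe)) (𝓝 x) := by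
      simpa [h𝒱, Ultrafilter.coe_map, Filter.tendsto_map'_iff, Function.comp_def] using h1
    have hsmul : Tendsto (fun p : G × Xe => p.1 • p.2) (𝒱 : Filter (G × Xe)) (𝓝 y) := by
      simpa [h𝒱, Ultrafilter.coe_map, Filter.tendsto_map'_iff, Function.comp_def] using h2
    obtain ⟨g, hgx, hgle⟩ := key 𝒱 x y hxX hyX hsnd hsmul
    -- first coordinate of 𝒱 is constantly t⁻¹, so g = t⁻¹
    have hfst : Tendsto Prod.fst (𝒱 : Filter (G × Xe)) (𝓝 g) :=
      (continuous_fst.tendsto _).comp hgle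
    have hfst' : Tendsto Prod.fst (𝒱 : Filter (G × Xe)) (𝓝 t⁻¹) := by
      rw [h𝒱, Ultrafilter.coe_map, Filter.tendsto_map'_iff]
      exact tendsto_const_nhds
    have hg : g = t⁻¹ := tendsto_nhds_unique hfst hfst'
    subst hg
    -- conclude
    have : y = t⁻¹ • x := hgx.symm
    rw [this, ht]
    simp [smul_smul, mul_assoc]
  refine ⟨hT2, ?_⟩
  rw [isProperMap_iff_ultrafilter]
  refine ⟨(continuous_fst.smul continuous_snd).prodMk continuous_snd, ?_⟩
  intro 𝒰 zw hzw
  obtain ⟨a, x₀, hx₀X, hax⟩ := hcover zw.1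
  obtain ⟨b, y₀, hy₀X, hby⟩ := hcover zw.2
  have hfst : Tendsto (fun p : G × Xe => p.1 • p.2) (𝒰 : Filter (G × Xe)) (𝓝 (a • x₀)) := by
    rw [hax]; exact (continuous_fst.tendsto zw).comp hzw
  have hsnd : Tendsto (Prod.snd : G × Xe → Xe) (𝒰 : Filter (G × Xe)) (𝓝 (b • y₀)) := by
    rw [hby]; exact (continuous_snd.tendsto zw).comp hzw
  set φ : G × Xe → G × Xe := fun p => (a⁻¹ * p.1 * b, b⁻¹ • p.2) with hφ
  set 𝒱 : Ultrafilter (G × Xe) := 𝒰.map φ with h𝒱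
  have hsnd' : Tendsto Prod.snd (𝒱 : Filter (G × Xe)) (𝓝 y₀) := by
    have : Tendsto (fun p : G × Xe => b⁻¹ • p.2) (𝒰 : Filter (G × Xe)) (𝓝 y₀) := by
      have := ((continuous_const_smul b⁻¹).tendsto (b • y₀)).comp hsnd
      simpa [inv_smul_smul, Function.comp_def] using this
    simpa [h𝒱, hφ, Ultrafilter.coe_map, Filter.tendsto_map'_iff, Function.comp_def] using this
  have hsmul' : Tendsto (fun p : G × Xe => p.1 • p.2) (𝒱 : Filter (G × Xe)) (𝓝 x₀) := by
    have : Tendsto (fun p : G × Xe => (a⁻¹ * p.1 * b) • b⁻¹ • p.2)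
        (𝒰 : Filter (G × Xe)) (𝓝 x₀) := by
      have := ((continuous_const_smul a⁻¹).tendsto (a • x₀)).comp hfst
      rw [inv_smul_smul] at this
      refine this.congr fun p => ?_
      simp [smul_smul, mul_assoc]
    simpa [h𝒱, hφ, Ultrafilter.coe_map, Filter.tendsto_map'_iff, Function.comp_def] using this
  obtain ⟨g, hgy, hgle⟩ := key 𝒱 y₀ x₀ hy₀X hx₀X hsnd' hsmul'
  set ψ : G × Xe → G × Xe := fun q => (a * q.1 * b⁻¹, b • q.2) with hψ
  have hψφ : ∀ p, ψ (φ p) = p := by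
    intro p
    simp [hψ, hφ, mul_assoc, smul_smul]
  have hcψ : Continuous ψ :=
    ((continuous_const.mul continuous_fst).mul continuous_const).prodMk
      (continuous_const.smul continuous_snd)
  have h𝒰eq : (𝒰 : Filter (G × Xe)) = map ψ (𝒱 : Filter (G × Xe)) := by
    rw [h𝒱, Ultrafilter.coe_map, Filter.map_map, show ψ ∘ φ = id from funext hψφ,
      Filter.map_id]
  refine ⟨(a * g * b⁻¹, b • y₀), ?_, ?_⟩
  · have h1 : (a * g * b⁻¹) • (b • y₀) = zw.1 := by
      rw [← hax]; rw [mul_smul, mul_smul, inv_smul_smul, hgy]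
    have h2 : b • y₀ = zw.2 := hby
    exact Prod.ext_iff.mpr ⟨h1, h2⟩
  · rw [h𝒰eq]
    calc map ψ (𝒱 : Filter (G × Xe)) ≤ map ψ (𝓝 (g, y₀)) := Filter.map_mono hgle
      _ ≤ 𝓝 (ψ (g, y₀)) := (hcψ.tendsto _)
      _ = 𝓝 (a * g * b⁻¹, b • y₀) := by simp [hψ]
end

section
/- A topological partial action τ of H on Y is free if and only if its enveloping action τ^e on Y^e is free. -/
/-- Let `τ^e` be a global continuous action of `H` on `Y^e` and `Y ⊆ Y^e` open
with `Y^e = ⋃_t τ^e_t(Y)`, so that the restriction `τ` to `Y` (with domains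
`Y_t = Y ∩ τ^e_t(Y)`) is a topological partial action with enveloping action
`τ^e`.  Then `τ` is free (no nontrivial `t` fixes a point of its domain) if and
only if the enveloping action `τ^e` is free. -/
theorem free_iff_env_free {H Ye : Type*} [Group H] [TopologicalSpace Ye] [MulAction H Ye]
    (Y : Set Ye) (hY : IsOpen Y)
    (hc : ∀ t : H, Continuous fun y : Ye => t • y)
    (hcover : ∀ z : Ye, ∃ t : H, ∃ y ∈ Y, t • y = z) :
    (∀ t : H, t ≠ 1 → ∀ y ∈ Y, t • y ∈ Y → t • y ≠ y) ↔
    (∀ (t : H) (y : Ye), t • y = y → t = 1) := by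
  constructor
  · intro hfree t z htz
    obtain ⟨s, x, hx, hsx⟩ := hcover z
    by_contra ht
    have hfix : (s⁻¹ * t * s) • x = x := by
      subst hsx
      have : (s⁻¹ * t * s) • s⁻¹ • (s • x) = s⁻¹ • (s • x) := by
        simp [mul_smul, htz]
      simpa using this
    have hne : s⁻¹ * t * s ≠ 1 := by
      intro h
      apply ht
      have := congrArg (fun u => s * u * s⁻¹) h
      simpa [mul_assoc] using this
    exact hfree _ hne x hx (by rw [hfix]; exact hx) hfix
  · intro hfree t ht y _ _ h
    exact ht (hfree t y h)
end

section
/- Let (a,b) ↦ a·b be a non-degenerate action by adjointable maps of the Fell bundle 𝒜 on the Fell bundle ℬ over G, where non-degenerate means the closed span of (A_t A_{t⁻¹})·B_e equals the closed span of B_t B_{t⁻¹} for all t. Then for all t ∈ G the closed spans satisfy A_t · B_e = A_e · B_t = B_t. -/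
/-- A Fell bundle over a group `G`, encoded as a `G`-grading of a (non-unital)
C*-algebra `A` by closed subspaces: `fiber s * fiber t ⊆ fiber (s*t)` and
`(fiber t)* = fiber t⁻¹`.  The C*-axioms `‖b* b‖ = ‖b‖²` and positivity of
`b* b` hold in the ambient C*-algebra. -/
structure FellBundle (G : Type*) [Group G] (A : Type*) [NonUnitalCStarAlgebra A] where
  fiber : G → Submodule ℂ A
  isClosed_fiber : ∀ t, IsClosed (fiber t : Set A)
  mul_mem : ∀ {s t : G} {a b : A}, a ∈ fiber s → b ∈ fiber t → a * b ∈ fiber (s * t)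
  star_mem : ∀ {t : G} {a : A}, a ∈ fiber t → star a ∈ fiber t⁻¹

variable {G : Type*} [Group G] {A B : Type*} [NonUnitalCStarAlgebra A] [NonUnitalCStarAlgebra B]

/-- An action of a Fell bundle `𝒜` on a Fell bundle `ℬ` by adjointable maps:
`a·b ∈ B_{st}` for `a ∈ A_s`, `b ∈ B_t`; linearity in the first variable;
`a·(c·b) = (ac)·b`; and `(a·b)* d = b* (a*·d)`. -/
structure AdjAction (FA : FellBundle G A) (FB : FellBundle G B) where
  act : A → B → B
  act_mem : ∀ {s t : G} {a : A} {b : B},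
    a ∈ FA.fiber s → b ∈ FB.fiber t → act a b ∈ FB.fiber (s * t)
  add_act : ∀ {s t : G} {a a' : A} {b : B},
    a ∈ FA.fiber s → a' ∈ FA.fiber s → b ∈ FB.fiber t →
    act (a + a') b = act a b + act a' b
  smul_act : ∀ {s t : G} (c : ℂ) {a : A} {b : B},
    a ∈ FA.fiber s → b ∈ FB.fiber t → act (c • a) b = c • act a b
  assoc : ∀ {s u t : G} {a c : A} {b : B},
    a ∈ FA.fiber s → c ∈ FA.fiber u → b ∈ FB.fiber t → act a (act c b) = act (a * c) b
  adjoint : ∀ {s t u : G} {a : A} {b d : B},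
    a ∈ FA.fiber s → b ∈ FB.fiber t → d ∈ FB.fiber u →
    star (act a b) * d = star b * act (star a) d

/-- Closed linear span of a subset of a normed `ℂ`-module. -/
def cspan {B : Type*} [NonUnitalCStarAlgebra B] (S : Set B) : Set B :=
  closure ((Submodule.span ℂ S : Submodule ℂ B) : Set B)

/-- Non-degeneracy of an action by adjointable maps:
`cspan ((A_t A_{t⁻¹}) · B_e) = cspan (B_t B_{t⁻¹})` for every `t`. -/
def AdjAction.Nondeg {FA : FellBundle G A} {FB : FellBundle G B} (E : AdjAction FA FB) : Prop :=
  ∀ t : G,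
    cspan {x : B | ∃ a ∈ FA.fiber t, ∃ a' ∈ FA.fiber t⁻¹, ∃ b ∈ FB.fiber (1 : G),
        x = E.act (a * a') b}
      = cspan {x : B | ∃ b ∈ FB.fiber t, ∃ b' ∈ FB.fiber t⁻¹, x = b * b'}


section Aux

lemma subset_cspan {B : Type*} [NonUnitalCStarAlgebra B] (S : Set B) : S ⊆ cspan S :=
  fun _ hx => subset_closure (Submodule.subset_span hx)

lemma cspan_subset_closed {B : Type*} [NonUnitalCStarAlgebra B] {S : Set B}
    {M : Submodule ℂ B} (hM : IsClosed (M : Set B)) (h : S ⊆ M) : cspan S ⊆ M :=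
  closure_minimal (Submodule.span_le.2 h) hM

lemma cspan_mono {B : Type*} [NonUnitalCStarAlgebra B] {S T : Set B}
    (h : S ⊆ cspan T) : cspan S ⊆ cspan T := by
  have hco : cspan T = ((Submodule.span ℂ T).topologicalClosure : Set B) := by
    rw [cspan, Submodule.topologicalClosure_coe]
  rw [hco] at h ⊢
  exact cspan_subset_closed (Submodule.isClosed_topologicalClosure _) h

lemma mul_right_mem_cspan {B : Type*} [NonUnitalCStarAlgebra B] {S : Set B} {x : B}
    (hx : x ∈ cspan S) (b : B) : x * b ∈ cspan ((fun y => y * b) '' S) := by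
  have hc : Continuous fun y : B => y * b := continuous_mul_right b
  have h1 : x * b ∈ closure ((fun y => y * b) '' ((Submodule.span ℂ S : Submodule ℂ B) : Set B)) :=
    image_closure_subset_closure_image hc ⟨x, hx, rfl⟩
  have h2 : (fun y => y * b) '' ((Submodule.span ℂ S : Submodule ℂ B) : Set B)
      = ((Submodule.span ℂ ((fun y => y * b) '' S) : Submodule ℂ B) : Set B) := by
    have := Submodule.map_span (LinearMap.mulRight ℂ b) S
    have hcoe : ((Submodule.map (LinearMap.mulRight ℂ b) (Submodule.span ℂ S) : Submodule ℂ B) : Set B)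
        = (fun y => y * b) '' ((Submodule.span ℂ S : Submodule ℂ B) : Set B) := rfl
    rw [← hcoe, this]
    rfl
  rw [cspan, ← h2]
  exact h1

variable {G : Type*} [Group G] {A B : Type*} [NonUnitalCStarAlgebra A] [NonUnitalCStarAlgebra B]

lemma fiber_congr {FB : FellBundle G B} {u v : G} (h : u = v) {x : B}
    (hx : x ∈ FB.fiber u) : x ∈ FB.fiber v := h ▸ hx

/-- The derived module property: `a·(c b) = (a·c) b`. -/
lemma AdjAction.act_mul {FA : FellBundle G A} {FB : FellBundle G B} (E : AdjAction FA FB)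
    {s u v : G} {x : A} {c b : B} (hx : x ∈ FA.fiber s) (hc : c ∈ FB.fiber u)
    (hb : b ∈ FB.fiber v) : E.act x (c * b) = E.act x c * b := by
  set δ := E.act x (c * b) - E.act x c * b with hδ
  have h1 : E.act x (c * b) ∈ FB.fiber (s * (u * v)) := E.act_mem hx (FB.mul_mem hc hb)
  have h2 : E.act x c * b ∈ FB.fiber (s * (u * v)) :=
    fiber_congr (by group) (FB.mul_mem (E.act_mem hx hc) hb)
  have hδmem : δ ∈ FB.fiber (s * (u * v)) := sub_mem h1 h2
  have e1 : star δ * E.act x (c * b) = star (E.act (star x) δ) * (c * b) := by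
    have h := E.adjoint (FA.star_mem hx) hδmem (FB.mul_mem hc hb)
    rw [star_star] at h
    exact h.symm
  have e2 : star δ * E.act x c = star (E.act (star x) δ) * c := by
    have h := E.adjoint (FA.star_mem hx) hδmem hc
    rw [star_star] at h
    exact h.symm
  have key : star δ * δ = 0 := by
    rw [hδ, mul_sub, ← mul_assoc, e1, e2, mul_assoc, sub_self]
  have hn : ‖δ‖ * ‖δ‖ = 0 := by
    rw [← CStarRing.norm_star_mul_self, key, norm_zero]
  have : δ = 0 := by
    have := mul_self_eq_zero.mp hn
    simpa using this
  exact sub_eq_zero.mp this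

end Aux

/-- For a non-degenerate action of `𝒜` on `ℬ` by adjointable maps, one has
`A_t · B_e = A_e · B_t = B_t` (closed linear spans), using the Fell bundle
identity `B_t = cspan (B_t B_t* B_t)`. -/
theorem adjAction_nondegenerate_spans {FA : FellBundle G A} {FB : FellBundle G B}
    (E : AdjAction FA FB) (hE : E.Nondeg)
    (hFell : ∀ t : G, cspan {x : B | ∃ b ∈ FB.fiber t, ∃ b' ∈ FB.fiber t,
        ∃ b'' ∈ FB.fiber t, x = b * star b' * b''} = (FB.fiber t : Set B)) :
    ∀ t : G,
      cspan {x : B | ∃ a ∈ FA.fiber t, ∃ b ∈ FB.fiber (1 : G), x = E.act a b}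
        = (FB.fiber t : Set B) ∧
      cspan {x : B | ∃ a ∈ FA.fiber (1 : G), ∃ b ∈ FB.fiber t, x = E.act a b}
        = (FB.fiber t : Set B) := by
  intro t
  set T1 : Set B := {x : B | ∃ a ∈ FA.fiber t, ∃ b ∈ FB.fiber (1 : G), x = E.act a b} with hT1
  set T2 : Set B := {x : B | ∃ a ∈ FA.fiber (1 : G), ∃ b ∈ FB.fiber t, x = E.act a b} with hT2
  set N : Set B := {x : B | ∃ a ∈ FA.fiber t, ∃ a' ∈ FA.fiber t⁻¹, ∃ b ∈ FB.fiber (1 : G),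
      x = E.act (a * a') b} with hN
  have hT1sub : cspan T1 ⊆ (FB.fiber t : Set B) := by
    refine cspan_subset_closed (FB.isClosed_fiber t) ?_
    rintro x ⟨a, ha, b, hb, rfl⟩
    exact fiber_congr (mul_one t) (E.act_mem ha hb)
  have hT2sub : cspan T2 ⊆ (FB.fiber t : Set B) := by
    refine cspan_subset_closed (FB.isClosed_fiber t) ?_
    rintro x ⟨a, ha, b, hb, rfl⟩
    exact fiber_congr (one_mul t) (E.act_mem ha hb)
  -- the key inclusion: each Fell triple lies in both closed spans
  have hkey : ∀ x ∈ {x : B | ∃ b ∈ FB.fiber t, ∃ b' ∈ FB.fiber t,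
      ∃ b'' ∈ FB.fiber t, x = b * star b' * b''}, x ∈ cspan T1 ∧ x ∈ cspan T2 := by
    rintro x ⟨b1, hb1, b2, hb2, b3, hb3, rfl⟩
    have hbb : b1 * star b2 ∈ cspan N := by
      rw [hE t]
      exact subset_cspan _ ⟨b1, hb1, star b2, FB.star_mem hb2, rfl⟩
    have hmul : b1 * star b2 * b3 ∈ cspan ((fun y => y * b3) '' N) :=
      mul_right_mem_cspan hbb b3
    have himg1 : (fun y => y * b3) '' N ⊆ T1 := by
      rintro y ⟨z, ⟨a, ha, a', ha', c, hc, rfl⟩, rfl⟩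
      have hcb : c * b3 ∈ FB.fiber ((1 : G) * t) := FB.mul_mem hc hb3
      have heq : E.act (a * a') c * b3 = E.act a (E.act a' (c * b3)) := by
        rw [← E.act_mul (FA.mul_mem ha ha') hc hb3, ← E.assoc ha ha' hcb]
      refine ⟨a, ha, E.act a' (c * b3), ?_, heq⟩
      exact fiber_congr (by group) (E.act_mem ha' hcb)
    have himg2 : (fun y => y * b3) '' N ⊆ T2 := by
      rintro y ⟨z, ⟨a, ha, a', ha', c, hc, rfl⟩, rfl⟩
      have hcb : c * b3 ∈ FB.fiber ((1 : G) * t) := FB.mul_mem hc hb3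
      refine ⟨a * a', fiber_congr (by group) (FA.mul_mem ha ha'),
        c * b3, fiber_congr (one_mul t) hcb,
        (E.act_mul (FA.mul_mem ha ha') hc hb3).symm⟩
    constructor
    · exact cspan_mono (fun y hy => subset_cspan _ (himg1 hy)) hmul
    · exact cspan_mono (fun y hy => subset_cspan _ (himg2 hy)) hmul
  have hsup1 : (FB.fiber t : Set B) ⊆ cspan T1 := by
    rw [← hFell t]
    exact cspan_mono (fun x hx => (hkey x hx).1)
  have hsup2 : (FB.fiber t : Set B) ⊆ cspan T2 := by
    rw [← hFell t]
    exact cspan_mono (fun x hx => (hkey x hx).2)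
  exact ⟨Set.Subset.antisymm hT1sub hsup1, Set.Subset.antisymm hT2sub hsup2⟩
end
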